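/- Let g be an n-dimensional real Lie algebra with tr(ad_x) = 0 for all x, let ∂ be the Koszul boundary on Λ g and ∂^* its adjoint on Λ g^*. For τ ∈ Λ^{p-k} g^* ⊗ Λ^n g (in degree p-k), one has ∂^* τ = (-1)^{n-p+k} * ∂ *^{-1} τ, where * is the Hodge star isomorphism. -/

import Mathlib

/-!
STATEMENT 13: Let `g` be an `n`-dimensional real Lie algebra with
`tr (ad x) = 0` for all `x` (unimodularity), let `∂` be the Koszul boundary
on `Λ g` and `∂^*` its adjoint on `Λ g^*`.  For `τ ∈ Λ^{p-k} g^* ⊗ Λⁿ g`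
one has `∂^* τ = (-1)^{n-p+k} * ∂ *^{-1} τ`, where `*` is the Hodge star
isomorphism `⟨*(X ⊗ det), Y⟩ = det(X ∧ Y)`.

Encoding: forms of degree `m` are represented by linear functionals on the
exterior algebra (evaluated on `Λᵐ g`); `detF` represents the top form
`det`, `ω` represents `τ` (in degree `m = p-k`), and `σ = *^{-1} τ` is
characterized by `det(σ ∧ Y) = ω(Y)` for `Y ∈ Λᵐ g`.  The Koszul boundary
`∂` is encoded by its defining formula on wedge monomials (0-based signs,
same parity as 1-based).  Evaluated against any `Y ∈ Λ^{m+1} g`, the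
asserted identity of forms reads `ω(∂Y) = (-1)^{n-p+k} det(∂σ ∧ Y)`.
-/

open scoped BigOperators

/-- The wedge monomial `x₁ ∧ ⋯ ∧ x_m` associated to a list of vectors. -/
noncomputable def wedgeList {g : Type*} [AddCommGroup g] [Module ℝ g]
    (l : List g) : ExteriorAlgebra ℝ g :=
  (l.map fun x => ExteriorAlgebra.ι ℝ x).prod


namespace KoszulAux

open ExteriorAlgebra

variable {g : Type*} [AddCommGroup g] [Module ℝ g]

lemma wedgeList_nil : wedgeList ([] : List g) = 1 := rfl

lemma wedgeList_cons (x : g) (l : List g) :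
    wedgeList (x :: l) = ι ℝ x * wedgeList l := by
  simp [wedgeList]

lemma wedgeList_append (l₁ l₂ : List g) :
    wedgeList (l₁ ++ l₂) = wedgeList l₁ * wedgeList l₂ := by
  simp [wedgeList]

lemma wedgeList_ofFn {m : ℕ} (v : Fin m → g) :
    wedgeList (List.ofFn v) = ιMulti ℝ m v := by
  rw [ιMulti_apply, wedgeList, List.map_ofFn]
  rfl

lemma wedgeList_mem (l : List g) : wedgeList l ∈ ⋀[ℝ]^(l.length) g := by
  induction l with
  | nil =>
      rw [wedgeList_nil]
      simp only [List.length_nil, exteriorPower, pow_zero]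
      exact ⟨1, by simp⟩
  | cons x t ih =>
      rw [wedgeList_cons]
      have hx : (ι ℝ x : ExteriorAlgebra ℝ g) ∈ LinearMap.range (ι ℝ (M := g)) :=
        ⟨x, rfl⟩
      simpa [exteriorPower, List.length_cons, pow_succ'] using Submodule.mul_mem_mul hx ih

lemma ι_mul_wedgeList (x : g) (l : List g) :
    ι ℝ x * wedgeList l = (-1 : ℝ) ^ l.length • (wedgeList l * ι ℝ x) := by
  induction l with
  | nil => simp [wedgeList_nil]
  | cons y t ih =>
      have h : ι ℝ x * ι ℝ y = -(ι ℝ y * ι ℝ x) :=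
        eq_neg_of_add_eq_zero_left (ι_add_mul_swap x y)
      rw [wedgeList_cons, List.length_cons, ← mul_assoc, h, neg_mul, mul_assoc, ih,
        mul_smul_comm, ← neg_smul, pow_succ, mul_neg_one, mul_assoc]

lemma wedgeList_mul_ι (x : g) (l : List g) :
    wedgeList l * ι ℝ x = (-1 : ℝ) ^ l.length • (ι ℝ x * wedgeList l) := by
  rw [ι_mul_wedgeList, smul_smul, ← pow_add]
  rw [Even.neg_one_pow ⟨l.length, by ring⟩, one_smul]

lemma wedgeList_cons_eraseIdx (a : g) :
    ∀ (j : ℕ) (l : List g), j < l.length →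
      wedgeList (a :: l.eraseIdx j) = (-1 : ℝ) ^ j • wedgeList (l.set j a)
  | 0, [], h => by simp at h
  | 0, y :: t, _ => by simp
  | (j+1), [], h => by simp at h
  | (j+1), y :: t, h => by
      have ht : j < t.length := by simpa using h
      have ih := wedgeList_cons_eraseIdx a j t ht
      have hswap : ι ℝ a * ι ℝ y = -(ι ℝ y * ι ℝ a) :=
        eq_neg_of_add_eq_zero_left (ι_add_mul_swap a y)
      rw [List.eraseIdx_cons_succ, show (y :: t).set (j+1) a = y :: t.set j a from rfl]
      rw [wedgeList_cons, wedgeList_cons, ← mul_assoc, hswap, neg_mul, mul_assoc,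
        ← wedgeList_cons, ih, wedgeList_cons, mul_smul_comm, ← neg_smul, pow_succ,
        mul_neg_one]

end KoszulAux
namespace KoszulAux

open ExteriorAlgebra

variable {g : Type*} [AddCommGroup g] [Module ℝ g]

lemma wedgeList_get (l : List g) : wedgeList l = ιMulti ℝ l.length l.get := by
  conv_lhs => rw [← List.ofFn_get l]
  rw [wedgeList_ofFn]

lemma wedgeList_eq_zero [FiniteDimensional ℝ g] {n : ℕ} (hn : Module.finrank ℝ g = n)
    (l : List g) (hl : n < l.length) : wedgeList l = 0 := by
  rw [wedgeList_get]
  refine AlternatingMap.map_linearDependent _ _ fun hli => ?_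
  have := hli.fintype_card_le_finrank
  simp only [Fintype.card_fin, hn] at this
  omega

/-- The set of wedge monomials of length `m`. -/
def wedgeSet (g : Type*) [AddCommGroup g] [Module ℝ g] (m : ℕ) :
    Set (ExteriorAlgebra ℝ g) :=
  {z | ∃ l : List g, l.length = m ∧ wedgeList l = z}

lemma exteriorPower_le_span (m : ℕ) :
    (⋀[ℝ]^m g : Submodule ℝ (ExteriorAlgebra ℝ g)) ≤ Submodule.span ℝ (wedgeSet g m) := by
  rw [← ExteriorAlgebra.ιMulti_span_fixedDegree]
  refine Submodule.span_mono ?_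
  rintro _ ⟨v, rfl⟩
  exact ⟨List.ofFn v, by simp, wedgeList_ofFn v⟩

lemma list_set_eq_ofFn_update (l : List g) (j : Fin l.length) (a : g) :
    l.set j a = List.ofFn (Function.update l.get j a) := by
  refine List.ext_get (by simp) fun i h1 h2 => ?_
  simp only [List.get_eq_getElem, List.getElem_set, List.getElem_ofFn]
  have h3 : i < l.length := by simpa using h1
  by_cases hij : (j : ℕ) = i
  · have : (⟨i, by simpa using h2⟩ : Fin l.length) = j := by
      exact Fin.ext hij.symm
    rw [if_pos hij, this, Function.update_self]
  · have hne : (⟨i, by simpa using h2⟩ : Fin l.length) ≠ j :=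
      Fin.ne_of_val_ne fun h => hij h.symm
    rw [if_neg hij, Function.update_of_ne hne]
    simp

/-- The multilinear map applying `f` in slot `j` of an `m`-fold wedge. -/
noncomputable def slotMap (f : g →ₗ[ℝ] g) (m : ℕ) (j : Fin m) :
    MultilinearMap ℝ (fun _ : Fin m => g) (ExteriorAlgebra ℝ g) :=
  (ιMulti ℝ m (M := g)).toMultilinearMap.compLinearMap
    (fun i => if i = j then f else LinearMap.id)

lemma slotMap_apply (f : g →ₗ[ℝ] g) (m : ℕ) (j : Fin m) (v : Fin m → g) :
    slotMap f m j v = ιMulti ℝ m (Function.update v j (f (v j))) := by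
  classical
  simp only [slotMap, MultilinearMap.compLinearMap_apply, AlternatingMap.coe_multilinearMap]
  congr 1
  funext i
  by_cases hij : i = j
  · subst hij; simp
  · simp [hij, Function.update_of_ne hij]

/-- `∑ⱼ v₁ ∧ ⋯ ∧ f vⱼ ∧ ⋯ ∧ vₘ` as an alternating map. -/
noncomputable def traceSlots (f : g →ₗ[ℝ] g) (m : ℕ) :
    g [⋀^Fin m]→ₗ[ℝ] ExteriorAlgebra ℝ g where
  toMultilinearMap := ∑ j : Fin m, slotMap f m j
  map_eq_zero_of_eq' := by
    classical
    intro v i k hvik hik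
    change (∑ j : Fin m, slotMap f m j) v = 0
    rw [MultilinearMap.sum_apply]
    have h0 : ∀ j ∈ (Finset.univ : Finset (Fin m)), j ∉ ({i, k} : Finset (Fin m)) →
        slotMap f m j v = 0 := by
      intro j _ hj
      simp only [Finset.mem_insert, Finset.mem_singleton, not_or] at hj
      rw [slotMap_apply]
      refine AlternatingMap.map_eq_zero_of_eq _ _ ?_ hik
      rw [Function.update_of_ne (Ne.symm hj.1), Function.update_of_ne (Ne.symm hj.2), hvik]
    rw [← Finset.sum_subset (Finset.subset_univ ({i, k} : Finset (Fin m))) h0,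
      Finset.sum_pair hik, slotMap_apply, slotMap_apply]
    have he : Function.update v k (f (v k)) = (Function.update v i (f (v i))) ∘ Equiv.swap i k := by
      funext t
      simp only [Function.comp_apply]
      rcases eq_or_ne t i with rfl | hti
      · rw [Function.update_of_ne hik, Equiv.swap_apply_left,
          Function.update_of_ne (Ne.symm hik), hvik]
      · rcases eq_or_ne t k with rfl | htk
        · rw [Function.update_self, Equiv.swap_apply_right, Function.update_self, hvik]
        · rw [Function.update_of_ne htk, Equiv.swap_apply_of_ne_of_ne hti htk,
            Function.update_of_ne hti]
    rw [he, AlternatingMap.map_swap _ _ hik]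
    exact add_neg_cancel _

lemma traceSlots_apply (f : g →ₗ[ℝ] g) (m : ℕ) (v : Fin m → g) :
    traceSlots f m v = ∑ j : Fin m, ιMulti ℝ m (Function.update v j (f (v j))) := by
  classical
  show (∑ j : Fin m, slotMap f m j) v = _
  rw [MultilinearMap.sum_apply]
  exact Finset.sum_congr rfl fun j _ => slotMap_apply f m j v

lemma traceSlots_eq [FiniteDimensional ℝ g] {n : ℕ} (hn : Module.finrank ℝ g = n)
    (f : g →ₗ[ℝ] g) :
    traceSlots (g := g) f n = LinearMap.trace ℝ g f • ιMulti ℝ n := by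
  classical
  let b : Module.Basis (Fin n) ℝ g := (Module.finBasis ℝ g).reindex (finCongr hn)
  refine Module.Basis.ext_alternating b fun v hv => ?_
  have hbij : Function.Bijective v := Finite.injective_iff_bijective.mp hv
  rw [AlternatingMap.smul_apply, traceSlots_apply]
  have hterm : ∀ j : Fin n,
      ιMulti ℝ n (Function.update (fun i => b (v i)) j (f (b (v j))))
        = (b.repr (f (b (v j))) (v j)) • ιMulti ℝ n (fun i => b (v i)) := by
    intro j
    conv_lhs => rw [← b.sum_repr (f (b (v j)))]
    rw [AlternatingMap.map_update_sum]
    rw [Finset.sum_eq_single (v j)]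
    · rw [AlternatingMap.map_update_smul]
      congr 2
      exact Function.update_eq_self j _
    · intro i _ hivj
      rw [AlternatingMap.map_update_smul]
      obtain ⟨j', hj'⟩ := hbij.surjective i
      have hj'j : j' ≠ j := by
        rintro rfl
        exact hivj hj'.symm
      have hval : (Function.update (fun i => b (v i)) j (b i)) j'
          = (Function.update (fun i => b (v i)) j (b i)) j := by
        rw [Function.update_of_ne hj'j, Function.update_self, hj']
      rw [AlternatingMap.map_eq_zero_of_eq _ _ hval hj'j, smul_zero]
    · intro h
      exact absurd (Finset.mem_univ _) h
  rw [Finset.sum_congr rfl fun j _ => hterm j, ← Finset.sum_smul]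
  congr 1
  have h1 : ∑ j : Fin n, (b.repr (f (b (v j)))) (v j) = ∑ i : Fin n, (b.repr (f (b i))) i :=
    Equiv.sum_comp (Equiv.ofBijective v hbij) fun i => (b.repr (f (b i))) i
  rw [h1, LinearMap.trace_eq_matrix_trace ℝ b f, Matrix.trace]
  refine Finset.sum_congr rfl fun j _ => ?_
  simp [LinearMap.toMatrix_apply, Matrix.diag]

end KoszulAux
namespace KoszulAux

open ExteriorAlgebra

variable {g : Type*} [LieRing g] [LieAlgebra ℝ g]

/-- The "Lie derivative" term `∑ⱼ x₁ ∧ ⋯ ∧ [x,xⱼ] ∧ ⋯ ∧ xₘ`. -/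
noncomputable def lieTerm (x : g) (l : List g) : ExteriorAlgebra ℝ g :=
  ∑ j : Fin l.length, wedgeList (l.set (j : ℕ) ⁅x, l.get j⁆)

lemma lieTerm_eq_zero [FiniteDimensional ℝ g] {n : ℕ} (hn : Module.finrank ℝ g = n)
    (htr : ∀ x : g, LinearMap.trace ℝ g (LieAlgebra.ad ℝ g x) = 0)
    (x : g) (l : List g) (hl : l.length = n) : lieTerm x l = 0 := by
  have h1 : lieTerm x l = traceSlots (LieAlgebra.ad ℝ g x) l.length l.get := by
    rw [lieTerm, traceSlots_apply]
    refine Finset.sum_congr rfl fun j _ => ?_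
    rw [list_set_eq_ofFn_update, wedgeList_ofFn]
    congr 1
  have h2 := DFunLike.congr_fun
    (traceSlots_eq (show Module.finrank ℝ g = l.length by rw [hn, hl])
      (LieAlgebra.ad ℝ g x)) l.get
  rw [h1, h2, AlternatingMap.smul_apply, htr, zero_smul]

lemma lieTerm_append (x : g) (u v : List g) :
    lieTerm x (u ++ v) = lieTerm x u * wedgeList v + wedgeList u * lieTerm x v := by
  classical
  rw [lieTerm, lieTerm, lieTerm]
  have hlen : u.length + v.length = (u ++ v).length := List.length_append.symm
  rw [← Fin.sum_congr' _ hlen, Fin.sum_univ_add]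
  congr 1
  · rw [Finset.sum_mul]
    refine Finset.sum_congr rfl fun i _ => ?_
    have hilt : (i : ℕ) < u.length := i.isLt
    have hval : ((Fin.cast hlen (Fin.castAdd v.length i)) : ℕ) = (i : ℕ) := rfl
    rw [List.get_eq_getElem]
    simp only [hval]
    rw [List.getElem_append_left hilt, List.set_append, if_pos hilt, wedgeList_append,
      List.get_eq_getElem]
  · rw [Finset.mul_sum]
    refine Finset.sum_congr rfl fun i _ => ?_
    have hval : ((Fin.cast hlen (Fin.natAdd u.length i)) : ℕ) = u.length + (i : ℕ) := rfl
    have hge : u.length ≤ u.length + (i : ℕ) := Nat.le_add_right _ _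
    have hnlt : ¬ (u.length + (i : ℕ) < u.length) := by omega
    rw [List.get_eq_getElem]
    simp only [hval]
    rw [List.getElem_append_right hge, List.set_append, if_neg hnlt]
    simp only [Nat.add_sub_cancel_left]
    rw [wedgeList_append, List.get_eq_getElem]

end KoszulAux
namespace KoszulAux

open ExteriorAlgebra

variable {g : Type*} [LieRing g] [LieAlgebra ℝ g]

lemma bd_cons (bd : ExteriorAlgebra ℝ g →ₗ[ℝ] ExteriorAlgebra ℝ g)
    (hK : ∀ l : List g, bd (wedgeList l) = ∑ i : Fin l.length, ∑ j : Fin l.length,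
      if (i : ℕ) < (j : ℕ) then ((-1 : ℝ)) ^ ((i : ℕ) + (j : ℕ) + 1) •
        wedgeList (⁅l.get i, l.get j⁆ :: (l.eraseIdx j).eraseIdx i) else 0)
    (x : g) (u : List g) :
    bd (wedgeList (x :: u)) = lieTerm x u - ι ℝ x * bd (wedgeList u) := by
  classical
  rw [hK (x :: u), hK u, lieTerm, sub_eq_add_neg]
  erw [Fin.sum_univ_succ]
  congr 1
  · -- the `i = 0` row gives the Lie-derivative term
    erw [Fin.sum_univ_succ]
    have h00 : (if ((0 : Fin (u.length + 1)) : ℕ) < ((0 : Fin (u.length + 1)) : ℕ) then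
        ((-1 : ℝ)) ^ (((0 : Fin (u.length + 1)) : ℕ) + ((0 : Fin (u.length + 1)) : ℕ) + 1) •
          wedgeList (⁅(x :: u).get (0 : Fin (u.length + 1)), (x :: u).get (0 : Fin (u.length + 1))⁆ ::
            (((x :: u).eraseIdx ((0 : Fin (u.length + 1)) : ℕ)).eraseIdx
              ((0 : Fin (u.length + 1)) : ℕ))) else 0) = 0 := if_neg (lt_irrefl _)
    rw [h00, zero_add]
    refine Finset.sum_congr rfl fun j _ => ?_
    have hc : ((0 : Fin (u.length + 1)) : ℕ) < ((j.succ : Fin (u.length + 1)) : ℕ) :=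
      Nat.succ_pos _
    rw [if_pos hc]
    have hg0 : (x :: u).get (0 : Fin (u.length + 1)) = x := rfl
    have hgs : (x :: u).get j.succ = u.get j := by
      simp [List.get_eq_getElem, Fin.val_succ]
    have her : ((x :: u).eraseIdx ((j.succ : Fin (u.length + 1)) : ℕ)).eraseIdx
        ((0 : Fin (u.length + 1)) : ℕ) = u.eraseIdx (j : ℕ) := by
      simp only [Fin.val_succ, Fin.val_zero, List.eraseIdx_cons_succ,
        List.eraseIdx_cons_zero]
    rw [hg0, hgs, her, wedgeList_cons_eraseIdx _ _ _ j.isLt, smul_smul]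
    have hsgn : ((-1 : ℝ)) ^ (((0 : Fin (u.length + 1)) : ℕ) + ((j.succ : Fin (u.length + 1)) : ℕ) + 1)
        * ((-1 : ℝ)) ^ (j : ℕ) = 1 := by
      simp only [Fin.val_zero, Fin.val_succ, zero_add]
      rw [← pow_add]
      exact Even.neg_one_pow ⟨(j : ℕ) + 1, by ring⟩
    rw [hsgn, one_smul]
  · -- the `i ≥ 1` rows give `- ι x * bd`
    rw [Finset.mul_sum, ← Finset.sum_neg_distrib]
    refine Finset.sum_congr rfl fun i _ => ?_
    erw [Fin.sum_univ_succ]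
    have h0 : (if ((i.succ : Fin (u.length + 1)) : ℕ) < ((0 : Fin (u.length + 1)) : ℕ) then
        ((-1 : ℝ)) ^ (((i.succ : Fin (u.length + 1)) : ℕ) + ((0 : Fin (u.length + 1)) : ℕ) + 1) •
          wedgeList (⁅(x :: u).get i.succ, (x :: u).get (0 : Fin (u.length + 1))⁆ ::
            (((x :: u).eraseIdx ((0 : Fin (u.length + 1)) : ℕ)).eraseIdx
              ((i.succ : Fin (u.length + 1)) : ℕ))) else 0) = 0 :=
      if_neg (by simp)
    rw [h0, zero_add, Finset.mul_sum, ← Finset.sum_neg_distrib]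
    refine Finset.sum_congr rfl fun j _ => ?_
    have hgs : ∀ (t : Fin u.length), (x :: u).get t.succ = u.get t := fun t => by
      simp [List.get_eq_getElem, Fin.val_succ]
    by_cases hij : (i : ℕ) < (j : ℕ)
    · have hc : ((i.succ : Fin (u.length + 1)) : ℕ) < ((j.succ : Fin (u.length + 1)) : ℕ) := by
        simpa [Fin.val_succ] using Nat.succ_lt_succ hij
      rw [if_pos hc, if_pos hij, hgs i, hgs j]
      have her : ((x :: u).eraseIdx ((j.succ : Fin (u.length + 1)) : ℕ)).eraseIdx
          ((i.succ : Fin (u.length + 1)) : ℕ)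
          = x :: ((u.eraseIdx (j : ℕ)).eraseIdx (i : ℕ)) := by
        simp only [Fin.val_succ, List.eraseIdx_cons_succ]
      rw [her]
      set b : g := ⁅u.get i, u.get j⁆ with hb
      set rest : List g := (u.eraseIdx (j : ℕ)).eraseIdx (i : ℕ) with hrest
      have hswap : ι ℝ b * ι ℝ x = -(ι ℝ x * ι ℝ b) :=
        eq_neg_of_add_eq_zero_left (ι_add_mul_swap b x)
      have hw : wedgeList (b :: x :: rest) = -(ι ℝ x * wedgeList (b :: rest)) := by
        rw [wedgeList_cons, wedgeList_cons, ← mul_assoc, hswap, neg_mul, mul_assoc,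
          ← wedgeList_cons]
      rw [hw, smul_neg, mul_smul_comm]
      have hsgn : ((-1 : ℝ)) ^ (((i.succ : Fin (u.length + 1)) : ℕ)
          + ((j.succ : Fin (u.length + 1)) : ℕ) + 1) = ((-1 : ℝ)) ^ ((i : ℕ) + (j : ℕ) + 1) := by
        simp only [Fin.val_succ]
        rw [show (i : ℕ) + 1 + ((j : ℕ) + 1) + 1 = ((i : ℕ) + (j : ℕ) + 1) + 2 by ring,
          pow_add]
        norm_num
      rw [hsgn]
    · have hc : ¬ ((i.succ : Fin (u.length + 1)) : ℕ) < ((j.succ : Fin (u.length + 1)) : ℕ) := by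
        simpa [Fin.val_succ] using fun h => hij (Nat.lt_of_succ_lt_succ h)
      rw [if_neg hc, if_neg hij, mul_zero, neg_zero]

end KoszulAux
namespace KoszulAux

open ExteriorAlgebra

variable {g : Type*} [LieRing g] [LieAlgebra ℝ g]

lemma bd_wedge_mul_ι (bd : ExteriorAlgebra ℝ g →ₗ[ℝ] ExteriorAlgebra ℝ g)
    (hK : ∀ l : List g, bd (wedgeList l) = ∑ i : Fin l.length, ∑ j : Fin l.length,
      if (i : ℕ) < (j : ℕ) then ((-1 : ℝ)) ^ ((i : ℕ) + (j : ℕ) + 1) •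
        wedgeList (⁅l.get i, l.get j⁆ :: (l.eraseIdx j).eraseIdx i) else 0)
    (l : List g) (x : g) :
    bd (wedgeList l) * ι ℝ x
      = ((-1 : ℝ)) ^ (l.length + 1) • (ι ℝ x * bd (wedgeList l)) := by
  rw [hK l, Finset.sum_mul, Finset.mul_sum, Finset.smul_sum]
  refine Finset.sum_congr rfl fun i _ => ?_
  rw [Finset.sum_mul, Finset.mul_sum, Finset.smul_sum]
  refine Finset.sum_congr rfl fun j _ => ?_
  by_cases hij : (i : ℕ) < (j : ℕ)
  · rw [if_pos hij]
    have hj := j.isLt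
    have hi := i.isLt
    have hL : (⁅l.get i, l.get j⁆ :: (l.eraseIdx (j : ℕ)).eraseIdx (i : ℕ)).length
        = l.length - 1 := by
      simp only [List.length_cons, List.length_eraseIdx]
      split_ifs <;> omega
    rw [smul_mul_assoc, wedgeList_mul_ι, hL, mul_smul_comm, smul_smul, smul_smul]
    congr 1
    have hpow : ((-1 : ℝ)) ^ (l.length - 1) = ((-1 : ℝ)) ^ (l.length + 1) := by
      obtain ⟨t, ht⟩ : ∃ t, l.length = t + 2 := ⟨l.length - 2, by omega⟩
      rw [ht, show t + 2 - 1 = t + 1 by omega, show t + 2 + 1 = (t + 1) + 2 by ring,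
        pow_add ((-1 : ℝ)) (t + 1) 2]
      norm_num
    rw [hpow]
    ring
  · rw [if_neg hij, zero_mul, mul_zero, smul_zero]

lemma key_list [FiniteDimensional ℝ g] {n : ℕ} (hn : Module.finrank ℝ g = n)
    (htr : ∀ x : g, LinearMap.trace ℝ g (LieAlgebra.ad ℝ g x) = 0)
    (bd : ExteriorAlgebra ℝ g →ₗ[ℝ] ExteriorAlgebra ℝ g)
    (hK : ∀ l : List g, bd (wedgeList l) = ∑ i : Fin l.length, ∑ j : Fin l.length,
      if (i : ℕ) < (j : ℕ) then ((-1 : ℝ)) ^ ((i : ℕ) + (j : ℕ) + 1) •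
        wedgeList (⁅l.get i, l.get j⁆ :: (l.eraseIdx j).eraseIdx i) else 0) :
    ∀ la lb : List g, la.length + lb.length = n + 1 →
      bd (wedgeList la) * wedgeList lb
        = ((-1 : ℝ)) ^ la.length • (wedgeList la * bd (wedgeList lb)) := by
  intro la
  induction la with
  | nil =>
      intro lb hlen
      have hb : wedgeList lb = 0 := wedgeList_eq_zero hn lb (by simp at hlen; omega)
      have h1 : bd (wedgeList ([] : List g)) = 0 := by
        rw [hK []]
        simp
      rw [h1, hb, zero_mul, map_zero, mul_zero, smul_zero]
  | cons x la ih =>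
      intro lb hlen
      have hlen' : la.length + (x :: lb).length = n + 1 := by
        simp only [List.length_cons] at hlen ⊢
        omega
      have hIH := ih (x :: lb) hlen'
      rw [wedgeList_cons x lb, ← mul_assoc, bd_wedge_mul_ι bd hK la x, smul_mul_assoc,
        mul_assoc] at hIH
      have hIH2 : ι ℝ x * (bd (wedgeList la) * wedgeList lb)
          = -(wedgeList la * bd (wedgeList (x :: lb))) := by
        have h1 := congrArg (fun z => ((-1 : ℝ)) ^ (la.length + 1) • z) hIH
        simp only [smul_smul, ← pow_add] at h1
        rw [Even.neg_one_pow ⟨la.length + 1, by ring⟩, one_smul,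
          Odd.neg_one_pow ⟨la.length, by ring⟩, neg_one_smul] at h1
        exact h1
      have hlie : lieTerm x la * wedgeList lb + wedgeList la * lieTerm x lb = 0 := by
        rw [← lieTerm_append]
        refine lieTerm_eq_zero hn htr x (la ++ lb) ?_
        simp only [List.length_append]
        simp only [List.length_cons] at hlen
        omega
      have hcomm : wedgeList la * ι ℝ x = ((-1 : ℝ)) ^ la.length • (ι ℝ x * wedgeList la) :=
        wedgeList_mul_ι x la
      calc bd (wedgeList (x :: la)) * wedgeList lb
          = (lieTerm x la - ι ℝ x * bd (wedgeList la)) * wedgeList lb := by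
            rw [bd_cons bd hK x la]
        _ = lieTerm x la * wedgeList lb - ι ℝ x * (bd (wedgeList la) * wedgeList lb) := by
            rw [sub_mul, mul_assoc]
        _ = lieTerm x la * wedgeList lb + wedgeList la * bd (wedgeList (x :: lb)) := by
            rw [hIH2, sub_neg_eq_add]
        _ = lieTerm x la * wedgeList lb
              + wedgeList la * (lieTerm x lb - ι ℝ x * bd (wedgeList lb)) := by
            rw [bd_cons bd hK x lb]
        _ = (lieTerm x la * wedgeList lb + wedgeList la * lieTerm x lb)
              - (wedgeList la * ι ℝ x) * bd (wedgeList lb) := by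
            rw [mul_sub, ← mul_assoc, ← add_sub_assoc]
        _ = -(((-1 : ℝ)) ^ la.length • (ι ℝ x * wedgeList la * bd (wedgeList lb))) := by
            rw [hlie, zero_sub, hcomm, smul_mul_assoc]
        _ = ((-1 : ℝ)) ^ (x :: la).length • (wedgeList (x :: la) * bd (wedgeList lb)) := by
            rw [wedgeList_cons, List.length_cons, pow_succ, mul_neg_one, neg_smul, mul_assoc]

lemma bd_mem (bd : ExteriorAlgebra ℝ g →ₗ[ℝ] ExteriorAlgebra ℝ g)
    (hK : ∀ l : List g, bd (wedgeList l) = ∑ i : Fin l.length, ∑ j : Fin l.length,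
      if (i : ℕ) < (j : ℕ) then ((-1 : ℝ)) ^ ((i : ℕ) + (j : ℕ) + 1) •
        wedgeList (⁅l.get i, l.get j⁆ :: (l.eraseIdx j).eraseIdx i) else 0)
    (m : ℕ) (Y : ExteriorAlgebra ℝ g) (hY : Y ∈ ⋀[ℝ]^(m + 1) g) :
    bd Y ∈ ⋀[ℝ]^m g := by
  have hY' := exteriorPower_le_span (m + 1) hY
  refine Submodule.span_induction ?_ ?_ ?_ ?_ hY'
  · rintro z ⟨l, hl, rfl⟩
    rw [hK l]
    refine Submodule.sum_mem _ fun i _ => Submodule.sum_mem _ fun j _ => ?_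
    by_cases hij : (i : ℕ) < (j : ℕ)
    · rw [if_pos hij]
      refine Submodule.smul_mem _ _ ?_
      have hj := j.isLt
      have hi := i.isLt
      have hlen : (⁅l.get i, l.get j⁆ :: (l.eraseIdx (j : ℕ)).eraseIdx (i : ℕ)).length = m := by
        simp only [List.length_cons, List.length_eraseIdx]
        split_ifs <;> omega
      exact hlen ▸ wedgeList_mem _
    · rw [if_neg hij]
      exact Submodule.zero_mem _
  · rw [map_zero]
    exact Submodule.zero_mem _
  · intro a b _ _ ha hb
    rw [map_add]
    exact Submodule.add_mem _ ha hb
  · intro c a _ ha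
    rw [map_smul]
    exact Submodule.smul_mem _ _ ha

lemma key_span_right [FiniteDimensional ℝ g] {n : ℕ} (hn : Module.finrank ℝ g = n)
    (htr : ∀ x : g, LinearMap.trace ℝ g (LieAlgebra.ad ℝ g x) = 0)
    (bd : ExteriorAlgebra ℝ g →ₗ[ℝ] ExteriorAlgebra ℝ g)
    (hK : ∀ l : List g, bd (wedgeList l) = ∑ i : Fin l.length, ∑ j : Fin l.length,
      if (i : ℕ) < (j : ℕ) then ((-1 : ℝ)) ^ ((i : ℕ) + (j : ℕ) + 1) •
        wedgeList (⁅l.get i, l.get j⁆ :: (l.eraseIdx j).eraseIdx i) else 0)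
    {q q' : ℕ} (hqq : q + q' = n + 1) (la : List g) (hla : la.length = q)
    {b : ExteriorAlgebra ℝ g} (hb : b ∈ Submodule.span ℝ (wedgeSet g q')) :
    bd (wedgeList la) * b = ((-1 : ℝ)) ^ q • (wedgeList la * bd b) := by
  refine Submodule.span_induction ?_ ?_ ?_ ?_ hb
  · rintro w ⟨lb, hlb, rfl⟩
    rw [← hla]
    exact key_list hn htr bd hK la lb (by omega)
  · simp
  · intro u v _ _ hu hv
    rw [mul_add, hu, hv, map_add, mul_add, smul_add]
  · intro c u _ hu
    rw [mul_smul_comm, hu, map_smul, mul_smul_comm, smul_comm]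

lemma key_span [FiniteDimensional ℝ g] {n : ℕ} (hn : Module.finrank ℝ g = n)
    (htr : ∀ x : g, LinearMap.trace ℝ g (LieAlgebra.ad ℝ g x) = 0)
    (bd : ExteriorAlgebra ℝ g →ₗ[ℝ] ExteriorAlgebra ℝ g)
    (hK : ∀ l : List g, bd (wedgeList l) = ∑ i : Fin l.length, ∑ j : Fin l.length,
      if (i : ℕ) < (j : ℕ) then ((-1 : ℝ)) ^ ((i : ℕ) + (j : ℕ) + 1) •
        wedgeList (⁅l.get i, l.get j⁆ :: (l.eraseIdx j).eraseIdx i) else 0)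
    {q q' : ℕ} (hqq : q + q' = n + 1) {a b : ExteriorAlgebra ℝ g}
    (ha : a ∈ Submodule.span ℝ (wedgeSet g q)) (hb : b ∈ Submodule.span ℝ (wedgeSet g q')) :
    bd a * b = ((-1 : ℝ)) ^ q • (a * bd b) := by
  refine Submodule.span_induction ?_ ?_ ?_ ?_ ha
  · rintro z ⟨la, hla, rfl⟩
    exact key_span_right hn htr bd hK hqq la hla hb
  · simp
  · intro u v _ _ hu hv
    rw [map_add, add_mul, hu, hv, add_mul, smul_add]
  · intro c u _ hu
    rw [map_smul, smul_mul_assoc, hu, smul_mul_assoc, smul_comm]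

end KoszulAux

theorem koszul_adjoint_via_hodge_star
    {g : Type*} [LieRing g] [LieAlgebra ℝ g] [FiniteDimensional ℝ g]
    {n p k : ℕ} (hn : Module.finrank ℝ g = n) (hk : k ≤ p) (hp : p ≤ n)
    (htr : ∀ x : g, LinearMap.trace ℝ g (LieAlgebra.ad ℝ g x) = 0)
    (bd : ExteriorAlgebra ℝ g →ₗ[ℝ] ExteriorAlgebra ℝ g)
    (hKoszul : ∀ l : List g,
      bd (wedgeList l) =
        ∑ i : Fin l.length, ∑ j : Fin l.length,
          if (i : ℕ) < (j : ℕ) then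
            ((-1 : ℝ)) ^ ((i : ℕ) + (j : ℕ) + 1) •
              wedgeList (⁅l.get i, l.get j⁆ :: (l.eraseIdx j).eraseIdx i)
          else 0)
    (detF ω : ExteriorAlgebra ℝ g →ₗ[ℝ] ℝ)
    (σ : ExteriorAlgebra ℝ g) (hσ : σ ∈ ⋀[ℝ]^(n - (p - k)) g)
    (hpair : ∀ Y ∈ ⋀[ℝ]^(p - k) g, detF (σ * Y) = ω Y) :
    ∀ Y ∈ ⋀[ℝ]^(p - k + 1) g,
      ω (bd Y) = ((-1 : ℝ)) ^ (n - p + k) * detF (bd σ * Y) := by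
  intro Y hY
  have hm : p - k ≤ n := le_trans (Nat.sub_le _ _) hp
  have hbdY : bd Y ∈ ⋀[ℝ]^(p - k) g := KoszulAux.bd_mem bd hKoszul _ Y hY
  have h1 : ω (bd Y) = detF (σ * bd Y) := (hpair _ hbdY).symm
  have hσ' : σ ∈ Submodule.span ℝ (KoszulAux.wedgeSet g (n - (p - k))) :=
    KoszulAux.exteriorPower_le_span _ hσ
  have hY' : Y ∈ Submodule.span ℝ (KoszulAux.wedgeSet g (p - k + 1)) :=
    KoszulAux.exteriorPower_le_span _ hY
  have h2 : bd σ * Y = ((-1 : ℝ)) ^ (n - (p - k)) • (σ * bd Y) :=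
    KoszulAux.key_span hn htr bd hKoszul (by omega) hσ' hY'
  rw [h1, h2, map_smul, smul_eq_mul]
  have hexp : n - (p - k) = n - p + k := by omega
  rw [hexp, ← mul_assoc, ← pow_add, Even.neg_one_pow ⟨n - p + k, by ring⟩, one_mul]
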